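/- (Corollary 3.1, DEIM, spectral-norm part.) Let V ∈ ℝ^{n×r} have orthonormal columns with 1 ≤ r ≤ n. Then Σ_j w(j) · ‖(Vᵀ E_J)⁻¹‖₂² ≤ r(n − r) + 1, where ‖·‖₂ is the spectral norm (ℓ²→ℓ² operator norm), the sum runs over all sequences j = (j_1,…,j_r) ∈ {1,…,n}^r, and a summand with w(j) = 0 is interpreted as 0 (whenever w(j) > 0 the matrix VᵀE_J is invertible). That is, the index set I selected by Adaptive Randomized Pivoting applied to V satisfies E[‖(E_IᵀV)⁻¹‖₂²] ≤ r(n − r) + 1. -/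

import Mathlib

open Matrix BigOperators

/-- One step of the ARP recursion: project out the `i`-th row of `W`
(convention: leave `W` unchanged if that row is zero). -/
noncomputable def arpStep {n r : ℕ} (W : Matrix (Fin n) (Fin r) ℝ) (i : Fin n) :
    Matrix (Fin n) (Fin r) ℝ :=
  if W i = 0 then W
  else W * (1 - (∑ l, (W i l) ^ 2)⁻¹ • Matrix.of fun a b => W i a * W i b)

/-- The ARP iterates `V_k`. -/
noncomputable def arpIter {n r : ℕ} (V : Matrix (Fin n) (Fin r) ℝ) (j : Fin r → Fin n) :
    ℕ → Matrix (Fin n) (Fin r) ℝ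
  | 0 => V
  | k + 1 => if h : k < r then arpStep (arpIter V j k) (j ⟨k, h⟩) else arpIter V j k

/-- The ARP weight `w(j) = ∏_{k=1}^r ‖v_k‖²/(r-k+1)`. -/
noncomputable def arpWeight {n r : ℕ} (V : Matrix (Fin n) (Fin r) ℝ) (j : Fin r → Fin n) : ℝ :=
  ∏ k : Fin r, (∑ l, (arpIter V j k.val (j k) l) ^ 2) / ((r : ℝ) - (k.val : ℝ))

/-- The matrix `E_J` whose `k`-th column is the `j_k`-th standard basis vector of ℝⁿ. -/
def EJ {n k : ℕ} (j : Fin k → Fin n) : Matrix (Fin n) (Fin k) ℝ :=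
  Matrix.of fun i l => if i = j l then 1 else 0

/-- Squared Frobenius norm. -/
def frobSq {m n : ℕ} (A : Matrix (Fin m) (Fin n) ℝ) : ℝ := ∑ i, ∑ j, (A i j) ^ 2

/-- Spectral norm (ℓ²→ℓ² operator norm). -/
noncomputable def specNorm {r : ℕ} (M : Matrix (Fin r) (Fin r) ℝ) : ℝ :=
  ‖Matrix.toEuclideanCLM (𝕜 := ℝ) M‖

section AuxLemmas
open Finset Equiv


lemma seqCB {κ ι : Type*} [Fintype κ] [Fintype ι] [DecidableEq κ] [DecidableEq ι]
    (A : Matrix κ ι ℝ) (B : Matrix ι κ ℝ) :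
    ∑ j : κ → ι, (A.submatrix id j).det * (B.submatrix j id).det
      = (Nat.factorial (Fintype.card κ) : ℝ) * (A * B).det := by
  have key : ∀ j : κ → ι, (A.submatrix id j).det * (B.submatrix j id).det
      = ∑ σ : Perm κ, ∑ τ : Perm κ, (((Perm.sign σ : ℤ) : ℝ) * ((Perm.sign τ : ℤ) : ℝ)) *
          ∏ i, (A (σ i) (j i) * B (j i) (τ⁻¹ i)) := by
    intro j
    rw [det_apply' , det_apply', Finset.sum_mul_sum]
    refine Finset.sum_congr rfl fun σ _ => Finset.sum_congr rfl fun τ _ => ?_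
    have h1 : ∏ i, B (j (τ i)) i = ∏ i, B (j i) (τ⁻¹ i) := by
      have := Equiv.prod_comp τ (fun i => B (j i) (τ⁻¹ i))
      simpa using this
    simp only [submatrix_apply, id_eq, h1, Finset.prod_mul_distrib]
    ring
  rw [Finset.sum_congr rfl fun j _ => key j]
  rw [Finset.sum_comm]
  have key2 : ∀ σ τ : Perm κ, ∑ j : κ → ι, ∏ i, (A (σ i) (j i) * B (j i) (τ⁻¹ i))
      = ∏ i, (A * B) (σ i) (τ⁻¹ i) := by
    intro σ τ
    have := Finset.sum_prod_piFinset (Finset.univ : Finset ι)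
      (fun i x => A (σ i) x * B x (τ⁻¹ i))
    rw [Fintype.piFinset_univ] at this
    rw [this]
    exact Finset.prod_congr rfl fun i _ => (Matrix.mul_apply).symm
  have step : ∀ σ : Perm κ,
      (∑ j : κ → ι, ∑ τ : Perm κ, (((Perm.sign σ : ℤ) : ℝ) * ((Perm.sign τ : ℤ) : ℝ)) *
        ∏ i, (A (σ i) (j i) * B (j i) (τ⁻¹ i))) = (A * B).det := by
    intro σ
    rw [Finset.sum_comm]
    have : ∀ τ : Perm κ, (∑ j : κ → ι, (((Perm.sign σ : ℤ) : ℝ) * ((Perm.sign τ : ℤ) : ℝ)) *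
        ∏ i, (A (σ i) (j i) * B (j i) (τ⁻¹ i)))
        = (((Perm.sign σ : ℤ) : ℝ) * ((Perm.sign τ : ℤ) : ℝ)) * ∏ i, (A * B) (σ i) (τ⁻¹ i) := by
      intro τ
      rw [← Finset.mul_sum, key2 σ τ]
    rw [Finset.sum_congr rfl fun τ _ => this τ]
    -- reindex τ ↦ (σ * τ)⁻¹
    have hbij : Function.Bijective (fun τ : Perm κ => (σ * τ)⁻¹) := by
      constructor
      · intro a b h
        simpa using h
      · intro ρ
        exact ⟨σ⁻¹ * ρ⁻¹, by group⟩
    rw [← Matrix.det_transpose (A * B), det_apply']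
    refine Fintype.sum_bijective _ hbij _ _ (fun τ => ?_)
    have hsign : ((Perm.sign ((σ * τ)⁻¹) : ℤ) : ℝ)
        = ((Perm.sign σ : ℤ) : ℝ) * ((Perm.sign τ : ℤ) : ℝ) := by
      have : Perm.sign ((σ * τ)⁻¹) = Perm.sign σ * Perm.sign τ := by
        rw [Equiv.Perm.sign_inv, Equiv.Perm.sign_mul]
      rw [this]; push_cast; ring
    have hprod : ∏ i, (A * B) (σ i) (τ⁻¹ i) = ∏ i, (A * B)ᵀ (((σ * τ)⁻¹) i) i := by
      have := Equiv.prod_comp σ (fun i => (A * B)ᵀ (((σ * τ)⁻¹) i) i)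
      rw [← this]
      refine Finset.prod_congr rfl fun i _ => ?_
      have h2 : ((σ * τ)⁻¹) (σ i) = τ⁻¹ i := by
        simp [_root_.mul_inv_rev, Equiv.Perm.mul_apply]
      rw [h2, Matrix.transpose_apply]
    rw [hprod, hsign]
  rw [Finset.sum_congr rfl fun σ _ => step σ]
  rw [Finset.sum_const, Finset.card_univ, Fintype.card_perm, nsmul_eq_mul]

lemma det_one_submatrix {κ' ι : Type*} [Fintype κ'] [Fintype ι] [DecidableEq κ'] [DecidableEq ι]
    (c : κ' → ι) :
    ((1 : Matrix ι ι ℝ).submatrix c c).det = if Function.Injective c then (1:ℝ) else 0 := by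
  by_cases h : Function.Injective c
  · rw [if_pos h]
    have : (1 : Matrix ι ι ℝ).submatrix c c = 1 := by
      ext a b
      by_cases hab : a = b
      · subst hab; simp [Matrix.one_apply]
      · have : c a ≠ c b := fun e => hab (h e)
        simp [Matrix.one_apply, hab, this]
    rw [this, Matrix.det_one]
  · rw [if_neg h]
    obtain ⟨a, b, hab, hne⟩ : ∃ a b, c a = c b ∧ a ≠ b := by
      simp only [Function.Injective, not_forall] at h
      obtain ⟨a, b, e, ne⟩ := h
      exact ⟨a, b, e, ne⟩
    apply Matrix.det_zero_of_row_eq hne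
    funext x
    simp only [Matrix.submatrix_apply]
    rw [hab]

lemma sum_det_one_submatrix {κ' ι : Type*} [Fintype κ'] [Fintype ι] [DecidableEq κ'] [DecidableEq ι] :
    ∑ c : κ' → ι, ((1 : Matrix ι ι ℝ).submatrix c c).det = (Fintype.card (κ' ↪ ι) : ℝ) := by
  rw [Finset.sum_congr rfl fun c _ => det_one_submatrix c]
  rw [Finset.sum_boole]
  congr 1
  rw [← Fintype.card_subtype]
  exact Fintype.card_congr (Equiv.subtypeInjectiveEquivEmbedding κ' ι)

lemma sum_det_P {n r : ℕ} (V : Matrix (Fin n) (Fin r) ℝ) (hV : Vᵀ * V = 1)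
    (κ' : Type*) [Fintype κ'] [DecidableEq κ'] :
    ∑ j' : κ' → Fin n, ((V * Vᵀ).submatrix j' j').det
      = (Fintype.card (κ' ↪ Fin r) : ℝ) := by
  set F := (Nat.factorial (Fintype.card κ') : ℝ) with hF
  have hFne : F ≠ 0 := by
    rw [hF]
    exact_mod_cast Nat.factorial_ne_zero _
  apply mul_left_cancel₀ hFne
  calc F * ∑ j' : κ' → Fin n, ((V * Vᵀ).submatrix j' j').det
      = ∑ j' : κ' → Fin n, F * ((V.submatrix j' id) * (Vᵀ.submatrix id j')).det := by
        rw [Finset.mul_sum]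
        refine Finset.sum_congr rfl fun j' _ => ?_
        have hps : (V * Vᵀ).submatrix j' j' = (V.submatrix j' id) * (Vᵀ.submatrix id j') := by
          ext a b
          simp [Matrix.mul_apply, Matrix.submatrix_apply]
        rw [hps]
  _ = ∑ j' : κ' → Fin n, ∑ c : κ' → Fin r,
        ((V.submatrix j' id).submatrix id c).det * ((Vᵀ.submatrix id j').submatrix c id).det := by
        refine Finset.sum_congr rfl fun j' _ => ?_
        rw [seqCB (V.submatrix j' id) (Vᵀ.submatrix id j')]
  _ = ∑ c : κ' → Fin r, ∑ j' : κ' → Fin n,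
        ((Vᵀ.submatrix c id).submatrix id j').det * ((V.submatrix id c).submatrix j' id).det := by
        rw [Finset.sum_comm]
        refine Finset.sum_congr rfl fun c _ => Finset.sum_congr rfl fun j' _ => ?_
        have e1 : (V.submatrix j' id).submatrix id c = (V.submatrix id c).submatrix j' id := by
          ext a b; simp
        have e2 : (Vᵀ.submatrix id j').submatrix c id = (Vᵀ.submatrix c id).submatrix id j' := by
          ext a b; simp
        rw [e1, e2, mul_comm]
  _ = ∑ c : κ' → Fin r, F * ((Vᵀ.submatrix c id) * (V.submatrix id c)).det := by
        refine Finset.sum_congr rfl fun c _ => seqCB _ _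
  _ = ∑ c : κ' → Fin r, F * ((1 : Matrix (Fin r) (Fin r) ℝ).submatrix c c).det := by
        refine Finset.sum_congr rfl fun c _ => ?_
        congr 2
        have : (Vᵀ.submatrix c id) * (V.submatrix id c) = (Vᵀ * V).submatrix c c := by
          ext a b
          simp [Matrix.mul_apply, Matrix.submatrix_apply]
        rw [this, hV]
  _ = F * (Fintype.card (κ' ↪ Fin r) : ℝ) := by
        rw [← Finset.mul_sum, sum_det_one_submatrix]

lemma diag_adjugate_eq_minor {r : ℕ} (Q : Matrix (Fin r) (Fin r) ℝ) (l : Fin r) :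
    Q.adjugate l l
      = (Q.submatrix (Subtype.val : {k : Fin r // k ≠ l} → Fin r) Subtype.val).det := by
  rw [Matrix.adjugate_apply]
  set M' := Q.updateRow l (Pi.single l 1) with hM'
  have hrowl : M' l = Pi.single l 1 := by
    rw [hM']; exact Matrix.updateRow_self
  have hstep1 : M'.det = (M'.updateCol l (Pi.single l 1)).det := by
    conv_lhs => rw [← Matrix.updateCol_eq_self M' l]
    have hcol : (fun i => M' i l)
        = ((Pi.single l (1:ℝ) : Fin r → ℝ)) + (fun i => M' i l - (Pi.single l (1:ℝ) : Fin r → ℝ) i) := by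
      funext i; simp
    rw [hcol, Matrix.det_updateCol_add]
    have hzero : (M'.updateCol l (fun i => M' i l - (Pi.single l (1:ℝ) : Fin r → ℝ) i)).det = 0 := by
      apply Matrix.det_eq_zero_of_row_eq_zero l
      intro c
      by_cases hc : c = l
      · rw [hc, Matrix.updateCol_self, congrFun hrowl l]
        simp
      · rw [Matrix.updateCol_ne hc, congrFun hrowl c, Pi.single_eq_of_ne hc]
    rw [hzero, add_zero]
  rw [hstep1]
  set R := M'.updateCol l (Pi.single l 1) with hR
  set e : {k : Fin r // k = l} ⊕ {k : Fin r // ¬ k = l} ≃ Fin r := Equiv.sumCompl (· = l) with he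
  rw [← Matrix.det_submatrix_equiv_self e R]
  rw [← Matrix.fromBlocks_toBlocks (R.submatrix e e)]
  have h21 : (R.submatrix e e).toBlocks₂₁ = 0 := by
    ext a b
    simp only [Matrix.toBlocks₂₁, Matrix.of_apply, Matrix.submatrix_apply, Matrix.zero_apply]
    have heb : e (Sum.inl b) = l := b.2
    have hea : e (Sum.inr a) = (a : Fin r) := rfl
    rw [heb, hea, hR, Matrix.updateCol_self, Pi.single_eq_of_ne a.2]
  have h11 : (R.submatrix e e).toBlocks₁₁ = 1 := by
    ext a b
    have hab : a = b := Subtype.ext (a.2.trans b.2.symm)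
    subst hab
    simp only [Matrix.toBlocks₁₁, Matrix.of_apply, Matrix.submatrix_apply]
    have hea : e (Sum.inl a) = l := a.2
    rw [hea, hR, Matrix.updateCol_self, Pi.single_eq_same, Matrix.one_apply_eq]
  rw [h21, h11]
  rw [Matrix.det_fromBlocks_zero₂₁, Matrix.det_one, one_mul]
  congr 1
  ext a b
  simp only [Matrix.toBlocks₂₂, Matrix.of_apply, Matrix.submatrix_apply]
  have hea : e (Sum.inr a) = (a : Fin r) := rfl
  have heb : e (Sum.inr b) = (b : Fin r) := rfl
  rw [hea, heb, hR, Matrix.updateCol_ne b.2, hM', Matrix.updateRow_ne a.2]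

lemma sum_inj_minor {n r : ℕ} (V : Matrix (Fin n) (Fin r) ℝ) (hV : Vᵀ * V = 1) (l : Fin r) :
    ∑ j : Fin r → Fin n, (if Function.Injective j then (1:ℝ) else 0)
        * ((V * Vᵀ).submatrix (fun m : {m : Fin r // m ≠ l} => j m.val)
            (fun m : {m : Fin r // m ≠ l} => j m.val)).det
      = ((n - Fintype.card {m : Fin r // m ≠ l} : ℕ) : ℝ)
          * (Fintype.card ({m : Fin r // m ≠ l} ↪ Fin r) : ℝ) := by
  classical
  set P := V * Vᵀ with hP
  have happly : ∀ (p : Fin n × ({m : Fin r // m ≠ l} → Fin n)) (m : {m : Fin r // m ≠ l}),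
      (Equiv.funSplitAt l (Fin n)).symm p m.val = p.2 m := by
    intro p m
    rw [Equiv.funSplitAt_symm_apply, dif_neg m.2]
  have happlyl : ∀ (p : Fin n × ({m : Fin r // m ≠ l} → Fin n)),
      (Equiv.funSplitAt l (Fin n)).symm p l = p.1 := by
    intro p
    rw [Equiv.funSplitAt_symm_apply, dif_pos rfl]
  have hinj_iff : ∀ p : Fin n × ({m : Fin r // m ≠ l} → Fin n),
      Function.Injective ((Equiv.funSplitAt l (Fin n)).symm p)
        ↔ (Function.Injective p.2 ∧ ∀ m : {m : Fin r // m ≠ l}, p.2 m ≠ p.1) := by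
    intro p
    constructor
    · intro hinj
      constructor
      · intro m₁ m₂ hm
        have : (Equiv.funSplitAt l (Fin n)).symm p m₁.val
            = (Equiv.funSplitAt l (Fin n)).symm p m₂.val := by
          rw [happly p m₁, happly p m₂, hm]
        exact Subtype.ext (hinj this)
      · intro m hm
        have : (Equiv.funSplitAt l (Fin n)).symm p m.val
            = (Equiv.funSplitAt l (Fin n)).symm p l := by
          rw [happly p m, happlyl p, hm]
        exact m.2 (hinj this)
    · rintro ⟨h1, h2⟩ x y hxy
      by_cases hx : x = l <;> by_cases hy : y = l
      · rw [hx, hy]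
      · exfalso
        rw [hx, happlyl p, happly p ⟨y, hy⟩] at hxy
        exact h2 ⟨y, hy⟩ hxy.symm
      · exfalso
        rw [hy, happlyl p, happly p ⟨x, hx⟩] at hxy
        exact h2 ⟨x, hx⟩ hxy
      · rw [happly p ⟨x, hx⟩, happly p ⟨y, hy⟩] at hxy
        have := h1 hxy
        exact congrArg Subtype.val (this)
  set D : ({m : Fin r // m ≠ l} → Fin n) → ℝ :=
    fun j' => (P.submatrix j' j').det with hD
  have hcount : ∀ j' : {m : Fin r // m ≠ l} → Fin n, Function.Injective j' →
      (∑ a : Fin n, (if (Function.Injective j' ∧ ∀ m, j' m ≠ a) then (1:ℝ) else 0))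
        = ((n - Fintype.card {m : Fin r // m ≠ l} : ℕ) : ℝ) := by
    intro j' hinj
    have h1 : ∀ a : Fin n, (if (Function.Injective j' ∧ ∀ m, j' m ≠ a) then (1:ℝ) else 0)
        = (if (∀ m, j' m ≠ a) then (1:ℝ) else 0) := by
      intro a
      exact if_congr (and_iff_right hinj) rfl rfl
    rw [Finset.sum_congr rfl fun a _ => h1 a, Finset.sum_boole]
    congr 1
    have h2 : Finset.univ.filter (fun a : Fin n => ∀ m, j' m ≠ a)
        = (Finset.univ.image j')ᶜ := by
      ext a
      simp [not_exists, eq_comm]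
    rw [h2, Finset.card_compl, Finset.card_image_of_injective _ hinj, Finset.card_univ,
      Fintype.card_fin]
  have hDzero : ∀ j' : {m : Fin r // m ≠ l} → Fin n, ¬ Function.Injective j' → D j' = 0 := by
    intro j' hinj
    simp only [Function.Injective, not_forall] at hinj
    obtain ⟨m₁, m₂, he, hne⟩ := hinj
    apply Matrix.det_zero_of_row_eq hne
    funext x
    simp only [Matrix.submatrix_apply]
    rw [he]
  calc ∑ j : Fin r → Fin n, (if Function.Injective j then (1:ℝ) else 0)
        * (P.submatrix (fun m : {m : Fin r // m ≠ l} => j m.val)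
            (fun m : {m : Fin r // m ≠ l} => j m.val)).det
      = ∑ p : Fin n × ({m : Fin r // m ≠ l} → Fin n),
          (if Function.Injective ((Equiv.funSplitAt l (Fin n)).symm p) then (1:ℝ) else 0)
          * (P.submatrix (fun m : {m : Fin r // m ≠ l} => (Equiv.funSplitAt l (Fin n)).symm p m.val)
              (fun m : {m : Fin r // m ≠ l} => (Equiv.funSplitAt l (Fin n)).symm p m.val)).det := by
        exact (Equiv.sum_comp (Equiv.funSplitAt l (Fin n)).symm _).symm
  _ = ∑ p : Fin n × ({m : Fin r // m ≠ l} → Fin n),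
        (if (Function.Injective p.2 ∧ ∀ m, p.2 m ≠ p.1) then (1:ℝ) else 0) * D p.2 := by
        refine Finset.sum_congr rfl fun p _ => ?_
        have hfun : (fun m : {m : Fin r // m ≠ l} => (Equiv.funSplitAt l (Fin n)).symm p m.val)
            = p.2 := funext fun m => happly p m
        rw [hfun]
        congr 1
        · simp only [hinj_iff p]
  _ = ∑ j' : {m : Fin r // m ≠ l} → Fin n, ∑ a : Fin n,
        (if (Function.Injective j' ∧ ∀ m, j' m ≠ a) then (1:ℝ) else 0) * D j' := by
        rw [Fintype.sum_prod_type]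
        rw [Finset.sum_comm]
  _ = ∑ j' : {m : Fin r // m ≠ l} → Fin n,
        ((n - Fintype.card {m : Fin r // m ≠ l} : ℕ) : ℝ) * D j' := by
        refine Finset.sum_congr rfl fun j' _ => ?_
        by_cases hinj : Function.Injective j'
        · rw [← Finset.sum_mul, hcount j' hinj]
        · have hD0 : D j' = 0 := hDzero j' hinj
          rw [← Finset.sum_mul, hD0, mul_zero, mul_zero]
  _ = ((n - Fintype.card {m : Fin r // m ≠ l} : ℕ) : ℝ)
        * (Fintype.card ({m : Fin r // m ≠ l} ↪ Fin r) : ℝ) := by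
        rw [← Finset.mul_sum]
        congr 1
        exact sum_det_P V hV _

lemma sumsq_ne_zero {r : ℕ} {w : Fin r → ℝ} (hw : w ≠ 0) : (∑ l, (w l) ^ 2) ≠ 0 := by
  intro h
  apply hw
  funext l
  have := (Finset.sum_eq_zero_iff_of_nonneg (fun i _ => sq_nonneg (w i))).mp h l (Finset.mem_univ l)
  exact pow_eq_zero_iff (n := 2) (by norm_num) |>.mp this

lemma arpStep_apply {n r : ℕ} (W : Matrix (Fin n) (Fin r) ℝ) (i₀ : Fin n)
    (h : W i₀ ≠ 0) (a : Fin n) (c : Fin r) :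
    arpStep W i₀ a c
      = W a c - (∑ l, (W i₀ l) ^ 2)⁻¹ * (∑ l, W a l * W i₀ l) * W i₀ c := by
  rw [arpStep, if_neg h, Matrix.mul_sub, Matrix.mul_one]
  rw [Matrix.sub_apply]
  congr 1
  rw [Matrix.mul_smul, Matrix.smul_apply, Matrix.mul_apply]
  simp only [Matrix.of_apply, smul_eq_mul]
  calc (∑ l, (W i₀ l) ^ 2)⁻¹ * ∑ b, W a b * (W i₀ b * W i₀ c)
      = (∑ l, (W i₀ l) ^ 2)⁻¹ * ∑ b, (W a b * W i₀ b) * W i₀ c := by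
        congr 1
        exact Finset.sum_congr rfl fun b _ => by ring
  _ = (∑ l, (W i₀ l) ^ 2)⁻¹ * ((∑ b, W a b * W i₀ b) * W i₀ c) := by
        rw [Finset.sum_mul]
  _ = (∑ l, (W i₀ l) ^ 2)⁻¹ * (∑ l, W a l * W i₀ l) * W i₀ c := by ring

lemma arpIter_succ_of_lt {n r : ℕ} (V : Matrix (Fin n) (Fin r) ℝ) (j : Fin r → Fin n)
    {m : ℕ} (h : m < r) :
    arpIter V j (m + 1) = arpStep (arpIter V j m) (j ⟨m, h⟩) := by
  rw [arpIter, dif_pos h]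

lemma arpIter_succ_of_ge {n r : ℕ} (V : Matrix (Fin n) (Fin r) ℝ) (j : Fin r → Fin n)
    {m : ℕ} (h : ¬ m < r) :
    arpIter V j (m + 1) = arpIter V j m := by
  rw [arpIter, dif_neg h]

lemma arp_orth {n r : ℕ} (V : Matrix (Fin n) (Fin r) ℝ) (j : Fin r → Fin n) (m : ℕ) :
    ∀ (k : Fin r), (k : ℕ) < m → ∀ i,
      (∑ c, arpIter V j m i c * arpIter V j (k : ℕ) (j k) c) = 0 := by
  induction m with
  | zero => intro k hk; omega
  | succ m ih =>
    intro k hk i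
    by_cases h : m < r
    · rw [arpIter_succ_of_lt V j h]
      set W := arpIter V j m with hW
      set i₀ := j ⟨m, h⟩ with hi₀
      by_cases hw : W i₀ = 0
      · rw [arpStep, if_pos hw]
        rcases Nat.lt_succ_iff_lt_or_eq.mp hk with hk' | hk'
        · exact ih k hk' i
        · have hkm : k = ⟨m, h⟩ := Fin.ext hk'
          subst hkm
          rw [← hW, ← hi₀]
          simp [hw]
      · have hrow : ∀ a c, arpStep W i₀ a c
            = W a c - (∑ l, (W i₀ l) ^ 2)⁻¹ * (∑ l, W a l * W i₀ l) * W i₀ c :=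
          arpStep_apply W i₀ hw
        rcases Nat.lt_succ_iff_lt_or_eq.mp hk with hk' | hk'
        · have h1 := ih k hk' i
          have h2 := ih k hk' i₀
          calc ∑ c, arpStep W i₀ i c * arpIter V j (k : ℕ) (j k) c
              = ∑ c, (W i c * arpIter V j (k : ℕ) (j k) c
                - ((∑ l, (W i₀ l) ^ 2)⁻¹ * (∑ l, W i l * W i₀ l))
                    * (W i₀ c * arpIter V j (k : ℕ) (j k) c)) := by
                refine Finset.sum_congr rfl fun c _ => ?_
                rw [hrow i c]; ring
          _ = 0 := by
                rw [Finset.sum_sub_distrib, h1, ← Finset.mul_sum, h2]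
                ring
        · have hkm : k = ⟨m, h⟩ := Fin.ext hk'
          subst hkm
          simp only [← hW, ← hi₀]
          have hq : (∑ l, (W i₀ l) ^ 2) ≠ 0 := sumsq_ne_zero hw
          calc ∑ c, arpStep W i₀ i c * W i₀ c
              = ∑ c, (W i c * W i₀ c
                - ((∑ l, (W i₀ l) ^ 2)⁻¹ * (∑ l, W i l * W i₀ l)) * (W i₀ c * W i₀ c)) := by
                refine Finset.sum_congr rfl fun c _ => ?_
                rw [hrow i c]; ring
          _ = (∑ c, W i c * W i₀ c)
                - ((∑ l, (W i₀ l) ^ 2)⁻¹ * (∑ l, W i l * W i₀ l)) * (∑ c, W i₀ c * W i₀ c) := by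
                rw [Finset.sum_sub_distrib, ← Finset.mul_sum]
          _ = 0 := by
                have : (∑ c, W i₀ c * W i₀ c) = ∑ l, (W i₀ l) ^ 2 := by
                  exact Finset.sum_congr rfl fun c _ => (sq (W i₀ c)).symm
                rw [this]
                field_simp
                ring
    · rw [arpIter_succ_of_ge V j h]
      exact ih k (by omega) i

lemma arp_decomp {n r : ℕ} (V : Matrix (Fin n) (Fin r) ℝ) (j : Fin r → Fin n) (m : ℕ) :
    ∀ i, ∃ g : Fin r → ℝ, (∀ k : Fin r, m ≤ (k : ℕ) → g k = 0) ∧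
      ∀ c, V i c = arpIter V j m i c + ∑ k, g k * arpIter V j (k : ℕ) (j k) c := by
  induction m with
  | zero =>
    intro i
    exact ⟨0, fun k _ => rfl, fun c => by simp [arpIter]⟩
  | succ m ih =>
    intro i
    obtain ⟨g, hg0, hg⟩ := ih i
    by_cases h : m < r
    · rw [arpIter_succ_of_lt V j h]
      set W := arpIter V j m with hWdef
      set i₀ := j ⟨m, h⟩ with hi₀
      by_cases hw : W i₀ = 0
      · rw [arpStep, if_pos hw]
        exact ⟨g, fun k hk => hg0 k (by omega), hg⟩
      · set coef := (∑ l, (W i₀ l) ^ 2)⁻¹ * (∑ l, W i l * W i₀ l) with hcoef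
        set km : Fin r := ⟨m, h⟩ with hkm
        refine ⟨fun k' => g k' + (if k' = km then coef else 0), ?_, ?_⟩
        · intro k hk
          have h1 : g k = 0 := hg0 k (by omega)
          have h2 : k ≠ km := by
            intro e
            rw [e] at hk
            simp [hkm] at hk
          simp [h1, h2]
        · intro c
          rw [arpStep_apply W i₀ hw i c]
          have hsum : ∑ k, (g k + (if k = km then coef else 0)) * arpIter V j (k : ℕ) (j k) c
              = (∑ k, g k * arpIter V j (k : ℕ) (j k) c) + coef * W i₀ c := by
            simp only [add_mul]
            rw [Finset.sum_add_distrib]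
            congr 1
            rw [Finset.sum_eq_single km]
            · simp [hkm, ← hWdef, ← hi₀]
              exact Or.inl rfl
            · intro k _ hk
              rw [if_neg hk, zero_mul]
            · intro habs
              exact absurd (Finset.mem_univ km) habs
          rw [hsum, ← hcoef]
          have := hg c
          rw [this]
          ring
    · rw [arpIter_succ_of_ge V j h]
      exact ⟨g, fun k hk => hg0 k (by omega), hg⟩

lemma prod_range_sub_fact : ∀ r : ℕ, ∏ k ∈ Finset.range r, (r - k) = Nat.factorial r := by
  intro r
  induction r with
  | zero => simp
  | succ r ih =>
    rw [Finset.prod_range_succ']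
    simp only [Nat.add_sub_add_right, Nat.sub_zero]
    rw [ih, Nat.factorial_succ, mul_comm]

lemma prod_sub_fact (r : ℕ) : ∏ k : Fin r, ((r : ℝ) - (k : ℕ)) = (Nat.factorial r : ℝ) := by
  have h1 : ∀ k : Fin r, ((r : ℝ) - (k : ℕ)) = ((r - (k : ℕ) : ℕ) : ℝ) := by
    intro k
    rw [Nat.cast_sub k.isLt.le]
  rw [Finset.prod_congr rfl fun k _ => h1 k, ← Nat.cast_prod]
  rw [Fin.prod_univ_eq_prod_range (fun k => (r - k : ℕ)) r, prod_range_sub_fact r]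

lemma arpWeight_eq_det_sq {n r : ℕ} (V : Matrix (Fin n) (Fin r) ℝ) (j : Fin r → Fin n) :
    arpWeight V j = ((Vᵀ * EJ j).det) ^ 2 / (Nat.factorial r : ℝ) := by
  classical
  set W : Matrix (Fin r) (Fin r) ℝ := Matrix.of fun k c => arpIter V j (k : ℕ) (j k) c with hWdef
  set B : Matrix (Fin r) (Fin r) ℝ := Matrix.of fun k c => V (j k) c with hBdef
  -- orthogonality of the rows of W
  have hdot : ∀ k k' : Fin r, k ≠ k' → ∑ c, W k c * W k' c = 0 := by
    intro k k' hne
    rcases lt_or_gt_of_ne hne with hlt | hgt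
    · have := arp_orth V j (k' : ℕ) k hlt (j k')
      calc ∑ c, W k c * W k' c = ∑ c, arpIter V j (k' : ℕ) (j k') c * arpIter V j (k : ℕ) (j k) c := by
            refine Finset.sum_congr rfl fun c _ => ?_
            simp [hWdef, mul_comm]
      _ = 0 := this
    · have := arp_orth V j (k : ℕ) k' hgt (j k)
      calc ∑ c, W k c * W k' c = ∑ c, arpIter V j (k : ℕ) (j k) c * arpIter V j (k' : ℕ) (j k') c := by
            refine Finset.sum_congr rfl fun c _ => rfl
      _ = 0 := this
  have hWWt : W * Wᵀ = Matrix.diagonal (fun k => ∑ l, (W k l) ^ 2) := by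
    ext k k'
    rw [Matrix.mul_apply]
    by_cases he : k = k'
    · subst he
      rw [Matrix.diagonal_apply_eq]
      exact Finset.sum_congr rfl fun c _ => by rw [Matrix.transpose_apply, sq]
    · rw [Matrix.diagonal_apply_ne _ he]
      rw [← hdot k k' he]
      exact Finset.sum_congr rfl fun c _ => by rw [Matrix.transpose_apply]
  -- triangular decomposition
  have hchoice : ∀ k : Fin r, ∃ g : Fin r → ℝ, (∀ k' : Fin r, (k : ℕ) ≤ (k' : ℕ) → g k' = 0) ∧
      ∀ c, V (j k) c = arpIter V j (k : ℕ) (j k) c + ∑ k', g k' * arpIter V j (k' : ℕ) (j k') c :=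
    fun k => arp_decomp V j (k : ℕ) (j k)
  choose g hg0 hgc using hchoice
  set L : Matrix (Fin r) (Fin r) ℝ :=
    Matrix.of fun k k' => (if k' = k then (1:ℝ) else 0) + g k k' with hLdef
  have hLtri : L.BlockTriangular OrderDual.toDual := by
    intro k k' hkk
    have h1 : (k : ℕ) < (k' : ℕ) := hkk
    have h2 : k' ≠ k := by intro e; subst e; omega
    simp [hLdef, h2, hg0 k k' h1.le]
  have hLdiag : ∀ k, L k k = 1 := by
    intro k
    simp [hLdef, hg0 k k le_rfl]
  have hBLW : B = L * W := by
    ext k c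
    rw [Matrix.mul_apply]
    have : ∀ k', L k k' * W k' c
        = (if k' = k then (1:ℝ) else 0) * W k' c + g k k' * W k' c := by
      intro k'
      simp [hLdef, add_mul]
    rw [Finset.sum_congr rfl fun k' _ => this k', Finset.sum_add_distrib]
    have h1 : ∑ k', (if k' = k then (1:ℝ) else 0) * W k' c = W k c := by
      rw [Finset.sum_eq_single k]
      · simp
      · intro b _ hb; simp [hb]
      · intro habs; exact absurd (Finset.mem_univ k) habs
    rw [h1]
    exact hgc k c
  have hdetL : L.det = 1 := by
    rw [Matrix.det_of_lowerTriangular L hLtri]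
    exact Finset.prod_eq_one fun k _ => hLdiag k
  have hdetB : B.det = W.det := by rw [hBLW, Matrix.det_mul, hdetL, one_mul]
  have hdetW : W.det ^ 2 = ∏ k, ∑ l, (W k l) ^ 2 := by
    rw [sq]
    nth_rewrite 2 [← Matrix.det_transpose W]
    rw [← Matrix.det_mul, hWWt, Matrix.det_diagonal]
  have hA : Vᵀ * EJ j = Bᵀ := by
    ext c k
    rw [Matrix.mul_apply]
    simp only [Matrix.transpose_apply, EJ, Matrix.of_apply, hBdef, mul_ite, mul_one, mul_zero]
    rw [Finset.sum_eq_single (j k)]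
    · simp
    · intro b _ hb; simp [hb]
    · intro habs; exact absurd (Finset.mem_univ (j k)) habs
  rw [hA, Matrix.det_transpose, hdetB, hdetW]
  rw [arpWeight]
  rw [Finset.prod_div_distrib, prod_sub_fact r]
  rfl

lemma euclid_norm_sq {r : ℕ} (y : EuclideanSpace ℝ (Fin r)) : ‖y‖ ^ 2 = ∑ i, (y i) ^ 2 := by
  rw [EuclideanSpace.norm_eq, Real.sq_sqrt (by positivity)]
  simp [sq_abs]

lemma clm_apply_eq_mulVec {r : ℕ} (N : Matrix (Fin r) (Fin r) ℝ)
    (y : EuclideanSpace ℝ (Fin r)) (i : Fin r) :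
    (Matrix.toEuclideanCLM (𝕜 := ℝ) N y) i = N.mulVec y i := rfl

lemma spec_le_frob {r : ℕ} (hr : 1 ≤ r) (M : Matrix (Fin r) (Fin r) ℝ)
    (hdet : IsUnit M.det)
    (hM : ∀ x : Fin r → ℝ, ∑ i, (M.mulVec x i) ^ 2 ≤ ∑ i, (x i) ^ 2) :
    specNorm M⁻¹ ^ 2 ≤ frobSq M⁻¹ - ((r : ℝ) - 1) := by
  set N := M⁻¹ with hN
  have hMN : M * N = 1 := Matrix.mul_nonsing_inv M hdet
  set T := Matrix.toEuclideanCLM (𝕜 := ℝ) N with hT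
  have hTnorm : ∀ y : EuclideanSpace ℝ (Fin r), ‖T y‖ ^ 2 = ∑ i, (N.mulVec y i) ^ 2 := by
    intro y
    rw [euclid_norm_sq]
    exact Finset.sum_congr rfl fun i _ => by rw [clm_apply_eq_mulVec]
  -- lower bound : ‖T y‖ ≥ ‖y‖
  have hlow : ∀ y : EuclideanSpace ℝ (Fin r), ‖y‖ ^ 2 ≤ ‖T y‖ ^ 2 := by
    intro y
    rw [hTnorm, euclid_norm_sq]
    have h1 : M.mulVec (N.mulVec (fun i => y i)) = fun i => y i := by
      rw [Matrix.mulVec_mulVec, hMN, Matrix.one_mulVec]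
    have := hM (N.mulVec (fun i => y i))
    rw [h1] at this
    exact this
  -- norm attained
  obtain ⟨x, hx1, hxmax⟩ : ∃ x : EuclideanSpace ℝ (Fin r), ‖x‖ = 1 ∧
      ∀ y : EuclideanSpace ℝ (Fin r), ‖y‖ = 1 → ‖T y‖ ≤ ‖T x‖ := by
    have hne : (Metric.sphere (0 : EuclideanSpace ℝ (Fin r)) 1).Nonempty := by
      refine ⟨EuclideanSpace.single ⟨0, hr⟩ (1 : ℝ), ?_⟩
      simp [EuclideanSpace.norm_single]
    obtain ⟨x, hxs, hmax⟩ := (isCompact_sphere (0 : EuclideanSpace ℝ (Fin r)) 1).exists_isMaxOn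
      hne (Continuous.norm (T.continuous)).continuousOn
    refine ⟨x, by simpa using hxs, fun y hy => isMaxOn_iff.mp hmax y (by simpa using hy)⟩
  have hTx : ‖T‖ = ‖T x‖ := by
    apply le_antisymm
    · apply ContinuousLinearMap.opNorm_le_bound _ (norm_nonneg (T x))
      intro y
      rcases eq_or_ne y 0 with h | h
      · simp [h]
      · have hy : ‖(‖y‖⁻¹ • y : EuclideanSpace ℝ (Fin r))‖ = 1 := by
          rw [norm_smul, norm_inv, norm_norm, inv_mul_cancel₀ (norm_ne_zero_iff.mpr h)]
        have := hxmax _ hy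
        rw [ContinuousLinearMap.map_smul, norm_smul, norm_inv, norm_norm] at this
        have hyp : (0:ℝ) < ‖y‖ := norm_pos_iff.mpr h
        calc ‖T y‖ = ‖y‖ * (‖y‖⁻¹ * ‖T y‖) := by field_simp
        _ ≤ ‖y‖ * ‖T x‖ := by
            apply mul_le_mul_of_nonneg_left this (le_of_lt hyp)
        _ = ‖T x‖ * ‖y‖ := mul_comm _ _
    · have h2 := T.le_opNorm x
      rw [hx1, mul_one] at h2
      exact h2
  -- orthonormal basis extension
  have hcard : Module.finrank ℝ (EuclideanSpace ℝ (Fin r)) = Fintype.card (Fin r) := by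
    simp [finrank_euclideanSpace]
  have horth : Orthonormal ℝ (Set.restrict {(⟨0, hr⟩ : Fin r)} (fun _ : Fin r => x)) := by
    rw [orthonormal_iff_ite]
    rintro ⟨i, hi⟩ ⟨j, hj⟩
    simp only [Set.mem_singleton_iff] at hi hj
    subst hi; subst hj
    rw [if_pos (Subtype.ext rfl)]
    show (inner ℝ x x : ℝ) = 1
    rw [real_inner_self_eq_norm_mul_norm, hx1, mul_one]
  obtain ⟨b, hb⟩ := horth.exists_orthonormalBasis_extension_of_card_eq hcard
  have hb0 : b ⟨0, hr⟩ = x := hb _ rfl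
  -- trace identity
  set U : Matrix (Fin r) (Fin r) ℝ := Matrix.of fun i k => b k i with hUdef
  have hU : Uᵀ * U = 1 := by
    ext k k'
    have := orthonormal_iff_ite.mp b.orthonormal k k'
    simp only [PiLp.inner_apply, RCLike.inner_apply, conj_trivial] at this
    simp only [Matrix.mul_apply, Matrix.transpose_apply, Matrix.one_apply, hUdef, Matrix.of_apply]
    rw [← this]; exact Finset.sum_congr rfl fun _ _ => mul_comm _ _
  have hUU : U * Uᵀ = 1 := mul_eq_one_comm.mp hU
  have htr : frobSq N = ∑ k, ‖T (b k)‖ ^ 2 := by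
    have h1 : ∀ k, ‖T (b k)‖ ^ 2 = ∑ i, ((N * U) i k) ^ 2 := by
      intro k
      rw [hTnorm]
      refine Finset.sum_congr rfl fun i _ => ?_
      simp [Matrix.mul_apply, Matrix.mulVec, dotProduct, hUdef]
    calc frobSq N = Matrix.trace (Nᵀ * N) := by
          simp only [frobSq, Matrix.trace, Matrix.diag_apply, Matrix.mul_apply,
            Matrix.transpose_apply, sq]
          rw [Finset.sum_comm]
    _ = Matrix.trace ((N * U)ᵀ * (N * U)) := by
          have hmat : (N * U)ᵀ * (N * U) = Uᵀ * (Nᵀ * N) * U := by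
            rw [Matrix.transpose_mul]
            simp [Matrix.mul_assoc]
          rw [hmat, Matrix.trace_mul_cycle, ← Matrix.mul_assoc, hUU, Matrix.one_mul]
    _ = ∑ k, ∑ i, ((N * U) i k) ^ 2 := by
          simp only [Matrix.trace, Matrix.diag_apply, Matrix.mul_apply,
            Matrix.transpose_apply, sq]
    _ = ∑ k, ‖T (b k)‖ ^ 2 := by
          exact (Finset.sum_congr rfl fun k _ => (h1 k).symm)
  -- assemble
  have hterm : ∀ k : Fin r, k ≠ ⟨0, hr⟩ → (1:ℝ) ≤ ‖T (b k)‖ ^ 2 := by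
    intro k _
    have := hlow (b k)
    rwa [b.orthonormal.1 k, one_pow] at this
  have hsplit : ∑ k, ‖T (b k)‖ ^ 2 ≥ ‖T x‖ ^ 2 + ((r:ℝ) - 1) := by
    rw [← Finset.add_sum_erase _ _ (Finset.mem_univ (⟨0, hr⟩ : Fin r)), hb0]
    have hcard2 : ((Finset.univ.erase (⟨0, hr⟩ : Fin r)).card : ℝ) = (r:ℝ) - 1 := by
      rw [Finset.card_erase_of_mem (Finset.mem_univ _)]
      simp only [Finset.card_univ, Fintype.card_fin]
      have : 1 ≤ r := hr
      push_cast [Nat.cast_sub this]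
      ring
    have : ((r:ℝ) - 1) ≤ ∑ k ∈ Finset.univ.erase (⟨0, hr⟩ : Fin r), ‖T (b k)‖ ^ 2 := by
      calc ((r:ℝ) - 1) = ∑ _k ∈ Finset.univ.erase (⟨0, hr⟩ : Fin r), (1:ℝ) := by
            rw [Finset.sum_const, nsmul_eq_mul, mul_one, hcard2]
      _ ≤ _ := Finset.sum_le_sum fun k hk => hterm k (Finset.ne_of_mem_erase hk)
    linarith
  have : specNorm N ^ 2 = ‖T x‖ ^ 2 := by rw [specNorm, ← hT, hTx]
  rw [hN] at this ⊢
  rw [this]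
  have := htr
  linarith [hsplit, htr]

lemma frobSq_nonneg {m n : ℕ} (A : Matrix (Fin m) (Fin n) ℝ) : 0 ≤ frobSq A := by
  apply Finset.sum_nonneg
  intro i _
  apply Finset.sum_nonneg
  intro k _
  exact sq_nonneg _

lemma frobSq_smul {r : ℕ} (c : ℝ) (X : Matrix (Fin r) (Fin r) ℝ) :
    frobSq (c • X) = c ^ 2 * frobSq X := by
  simp [frobSq, Finset.mul_sum, mul_pow]

lemma descFact (m : ℕ) : (m + 1).descFactorial m = Nat.factorial (m + 1) := by
  induction m with
  | zero => rfl
  | succ m ih => rw [Nat.succ_descFactorial_succ, ih, Nat.factorial_succ, Nat.factorial_succ, Nat.factorial_succ]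

end AuxLemmas

/-- Corollary 3.1, spectral part:
`E[‖(E_Iᵀ V)⁻¹‖₂²] ≤ r(n − r) + 1` for the ARP index set. -/
theorem deim_expected_specNormSq {n r : ℕ} (hr : 1 ≤ r) (hrn : r ≤ n)
    (V : Matrix (Fin n) (Fin r) ℝ) (hV : Vᵀ * V = 1) :
    ∑ j : Fin r → Fin n, arpWeight V j * specNorm ((Vᵀ * EJ j)⁻¹) ^ 2 ≤
      (r : ℝ) * ((n : ℝ) - (r : ℝ)) + 1 := by
  classical
  set P : Matrix (Fin n) (Fin n) ℝ := V * Vᵀ with hPdef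
  have hfact : (Nat.factorial r : ℝ) ≠ 0 := by exact_mod_cast Nat.factorial_ne_zero r
  -- basic structure of A j = Vᵀ * EJ j
  have hAsub : ∀ j : Fin r → Fin n, Vᵀ * EJ j = Vᵀ.submatrix id j := by
    intro j
    ext c k
    rw [Matrix.mul_apply]
    simp only [EJ, Matrix.of_apply, Matrix.submatrix_apply, id_eq, Matrix.transpose_apply,
      mul_ite, mul_one, mul_zero]
    rw [Finset.sum_eq_single (j k)]
    · simp
    · intro b _ hb; simp [hb]
    · intro habs; exact absurd (Finset.mem_univ (j k)) habs
  have hAT : ∀ j : Fin r → Fin n, (Vᵀ * EJ j)ᵀ = V.submatrix j id := by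
    intro j
    rw [hAsub j]
    ext k c
    simp
  have hdet2 : ∀ j : Fin r → Fin n, (Vᵀ * EJ j).det ^ 2
      = (Vᵀ.submatrix id j).det * (V.submatrix j id).det := by
    intro j
    rw [sq]
    nth_rewrite 2 [← Matrix.det_transpose (Vᵀ * EJ j)]
    rw [hAT j, hAsub j]
  have hS0 : ∑ j : Fin r → Fin n, (Vᵀ * EJ j).det ^ 2 = (Nat.factorial r : ℝ) := by
    rw [Finset.sum_congr rfl fun j _ => hdet2 j, seqCB Vᵀ V, hV, Matrix.det_one,
      mul_one, Fintype.card_fin]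
  have hweight : ∀ j : Fin r → Fin n,
      arpWeight V j = (Vᵀ * EJ j).det ^ 2 / (Nat.factorial r : ℝ) :=
    fun j => arpWeight_eq_det_sq V j
  have hwnonneg : ∀ j : Fin r → Fin n, 0 ≤ arpWeight V j := by
    intro j
    rw [hweight j]
    positivity
  have hsumw : ∑ j : Fin r → Fin n, arpWeight V j = 1 := by
    rw [Finset.sum_congr rfl fun j _ => hweight j, ← Finset.sum_div, hS0,
      div_self hfact]
  -- Gram matrix identity
  have hQ : ∀ j : Fin r → Fin n, (Vᵀ * EJ j)ᵀ * (Vᵀ * EJ j) = P.submatrix j j := by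
    intro j
    rw [hAT j, hAsub j]
    ext l l'
    simp [Matrix.mul_apply, hPdef]
  -- Frobenius norm of adjugate as sum of principal minors
  have hfrobadj : ∀ j : Fin r → Fin n, frobSq ((Vᵀ * EJ j).adjugate)
      = ∑ l : Fin r, (P.submatrix (fun m : {m : Fin r // m ≠ l} => j m.val)
          (fun m : {m : Fin r // m ≠ l} => j m.val)).det := by
    intro j
    have h1 : ((Vᵀ * EJ j)ᵀ * (Vᵀ * EJ j)).adjugate
        = (Vᵀ * EJ j).adjugate * ((Vᵀ * EJ j).adjugate)ᵀ := by
      rw [Matrix.adjugate_mul_distrib, Matrix.adjugate_transpose]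
    have h2 : frobSq ((Vᵀ * EJ j).adjugate)
        = ∑ l : Fin r, ((Vᵀ * EJ j)ᵀ * (Vᵀ * EJ j)).adjugate l l := by
      rw [h1]
      simp only [frobSq, Matrix.mul_apply, Matrix.transpose_apply, sq]
    rw [h2]
    refine Finset.sum_congr rfl fun l _ => ?_
    rw [hQ j, diag_adjugate_eq_minor]
    congr 1
  -- non-injective sequences give zero determinant
  have hdetinj : ∀ j : Fin r → Fin n, ¬ Function.Injective j → (Vᵀ * EJ j).det = 0 := by
    intro j hinj
    simp only [Function.Injective, not_forall] at hinj
    obtain ⟨k, k', he, hne⟩ := hinj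
    apply Matrix.det_zero_of_column_eq hne
    intro c
    rw [hAsub j]
    simp only [Matrix.submatrix_apply, id_eq]
    rw [he]
  -- contraction property for injective j
  have hcontract : ∀ j : Fin r → Fin n, Function.Injective j →
      ∀ x : Fin r → ℝ, ∑ i, ((Vᵀ * EJ j).mulVec x i) ^ 2 ≤ ∑ i, (x i) ^ 2 := by
    intro j hinj x
    set y := (EJ j).mulVec x with hy
    have hPP : P * P = P := by
      rw [hPdef, Matrix.mul_assoc, ← Matrix.mul_assoc Vᵀ V Vᵀ, hV, Matrix.one_mul]
    have hPt : Pᵀ = P := by rw [hPdef, Matrix.transpose_mul, Matrix.transpose_transpose]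
    have h1 : (Vᵀ * EJ j).mulVec x = Vᵀ.mulVec y := by
      rw [hy, Matrix.mulVec_mulVec]
    have h2 : ∑ i, ((Vᵀ * EJ j).mulVec x i) ^ 2 = dotProduct (y ᵥ* P) y := by
      rw [h1]
      have : ∑ i, (Vᵀ.mulVec y i) ^ 2
          = dotProduct (Vᵀ.mulVec y) (Vᵀ.mulVec y) := by
        simp [dotProduct, sq]
      rw [this]
      nth_rewrite 1 [Matrix.mulVec_transpose]
      rw [Matrix.dotProduct_mulVec, Matrix.vecMul_vecMul]
    have hEE : (EJ j)ᵀ * EJ j = 1 := by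
      ext l l'
      rw [Matrix.mul_apply]
      simp only [EJ, Matrix.of_apply, Matrix.transpose_apply, ite_mul, one_mul, zero_mul]
      rw [Finset.sum_eq_single (j l)]
      · simp [Matrix.one_apply, hinj.eq_iff, eq_comm]
      · intro b _ hb
        simp [hb]
      · intro habs; exact absurd (Finset.mem_univ (j l)) habs
    have h3 : ∑ i, (x i) ^ 2 = dotProduct y y := by
      have hx : ∑ i, (x i) ^ 2 = dotProduct x x := by simp [dotProduct, sq]
      rw [hx, hy]
      nth_rewrite 1 [show EJ j = ((EJ j)ᵀ)ᵀ from (Matrix.transpose_transpose _).symm]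
      rw [Matrix.mulVec_transpose, Matrix.dotProduct_mulVec, Matrix.vecMul_vecMul, hEE,
        Matrix.vecMul_one]
    have h4 : 0 ≤ dotProduct y y - dotProduct (y ᵥ* P) y := by
      set w := y ᵥ* (1 - P) with hw
      have hsub : y ᵥ* (1 - P) = y - y ᵥ* P := by
        rw [Matrix.vecMul_sub, Matrix.vecMul_one]
      have hidem : (1 - P) * (1 - P) = 1 - P := by
        have expand : (1 - P) * (1 - P) = 1 - P - P + P * P := by noncomm_ring
        rw [expand, hPP]
        abel
      have h5 : dotProduct w y = dotProduct w w := by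
        have hwt : (1 - P) *ᵥ y = w := by
          rw [hw, ← Matrix.mulVec_transpose]
          rw [Matrix.transpose_sub, Matrix.transpose_one, hPt]
        calc dotProduct w y
            = dotProduct (y ᵥ* ((1 - P) * (1 - P))) y := by rw [hidem, ← hw]
        _ = dotProduct ((y ᵥ* (1 - P)) ᵥ* (1 - P)) y := by rw [Matrix.vecMul_vecMul]
        _ = dotProduct (y ᵥ* (1 - P)) ((1 - P) *ᵥ y) := by
              rw [← Matrix.dotProduct_mulVec]
        _ = dotProduct w w := by rw [hwt, ← hw]
      have h6 : 0 ≤ dotProduct w w := by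
        apply Finset.sum_nonneg
        intro i _
        exact mul_self_nonneg _
      have h7 : dotProduct w y
          = dotProduct y y - dotProduct (y ᵥ* P) y := by
        rw [hw, hsub, sub_dotProduct]
      linarith [h5 ▸ h6, h7]
    linarith [h2, h3, h4]
  -- per-term spectral bound
  have hper : ∀ j : Fin r → Fin n, arpWeight V j * specNorm ((Vᵀ * EJ j)⁻¹) ^ 2
      ≤ arpWeight V j * frobSq ((Vᵀ * EJ j)⁻¹) - ((r:ℝ) - 1) * arpWeight V j := by
    intro j
    by_cases hdet : IsUnit (Vᵀ * EJ j).det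
    · have hinj : Function.Injective j := by
        by_contra hni
        exact hdet.ne_zero (hdetinj j hni)
      have hs := spec_le_frob hr (Vᵀ * EJ j) hdet (hcontract j hinj)
      have hw0 : 0 ≤ arpWeight V j := hwnonneg j
      have := mul_le_mul_of_nonneg_left hs hw0
      nlinarith [this]
    · have hd0 : (Vᵀ * EJ j).det = 0 := by
        by_contra h
        exact hdet (isUnit_iff_ne_zero.mpr h)
      have hw0 : arpWeight V j = 0 := by
        rw [hweight j, hd0]
        simp
      rw [hw0]
      simp
  -- the Frobenius-sum bound
  have hsum1 : ∑ j : Fin r → Fin n, arpWeight V j * frobSq ((Vᵀ * EJ j)⁻¹)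
      ≤ (r:ℝ) * ((n - (r-1) : ℕ) : ℝ) := by
    have hper2 : ∀ j : Fin r → Fin n, arpWeight V j * frobSq ((Vᵀ * EJ j)⁻¹)
        ≤ (if Function.Injective j then (1:ℝ) else 0) * frobSq ((Vᵀ * EJ j).adjugate)
            / (Nat.factorial r : ℝ) := by
      intro j
      by_cases hdet : IsUnit (Vᵀ * EJ j).det
      · have hinj : Function.Injective j := by
          by_contra hni
          exact hdet.ne_zero (hdetinj j hni)
        rw [if_pos hinj, one_mul, hweight j]
        have hne : (Vᵀ * EJ j).det ≠ 0 := hdet.ne_zero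
        have hfrobinv : (Vᵀ * EJ j).det ^ 2 * frobSq ((Vᵀ * EJ j)⁻¹)
            = frobSq ((Vᵀ * EJ j).adjugate) := by
          rw [Matrix.inv_def, Ring.inverse_eq_inv', frobSq_smul]
          field_simp
        have heq : (Vᵀ * EJ j).det ^ 2 / (Nat.factorial r : ℝ) * frobSq ((Vᵀ * EJ j)⁻¹)
            = frobSq ((Vᵀ * EJ j).adjugate) / (Nat.factorial r : ℝ) := by
          rw [div_mul_eq_mul_div, hfrobinv]
        exact le_of_eq heq
      · have hd0 : (Vᵀ * EJ j).det = 0 := by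
          by_contra h
          exact hdet (isUnit_iff_ne_zero.mpr h)
        have hw0 : arpWeight V j = 0 := by
          rw [hweight j, hd0]
          simp
        rw [hw0, zero_mul]
        apply div_nonneg _ (le_of_lt (by exact_mod_cast Nat.factorial_pos r))
        apply mul_nonneg _ (frobSq_nonneg _)
        split <;> norm_num
    have hcardk : ∀ l : Fin r, Fintype.card {m : Fin r // m ≠ l} = r - 1 := by
      intro l
      have := Fintype.card_subtype_compl (fun m : Fin r => m = l)
      rw [Fintype.card_subtype_eq, Fintype.card_fin] at this
      exact this
    have hemb : ∀ l : Fin r, (Fintype.card ({m : Fin r // m ≠ l} ↪ Fin r))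
        = Nat.factorial r := by
      intro l
      rw [Fintype.card_embedding_eq, Fintype.card_fin, hcardk l]
      obtain ⟨m, rfl⟩ : ∃ m, r = m + 1 := ⟨r - 1, by omega⟩
      simpa using descFact m
    calc ∑ j : Fin r → Fin n, arpWeight V j * frobSq ((Vᵀ * EJ j)⁻¹)
        ≤ ∑ j : Fin r → Fin n, (if Function.Injective j then (1:ℝ) else 0)
            * frobSq ((Vᵀ * EJ j).adjugate) / (Nat.factorial r : ℝ) :=
          Finset.sum_le_sum fun j _ => hper2 j
    _ = (∑ j : Fin r → Fin n, (if Function.Injective j then (1:ℝ) else 0)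
            * frobSq ((Vᵀ * EJ j).adjugate)) / (Nat.factorial r : ℝ) := by
          rw [Finset.sum_div]
    _ = (∑ l : Fin r, ∑ j : Fin r → Fin n, (if Function.Injective j then (1:ℝ) else 0)
            * (P.submatrix (fun m : {m : Fin r // m ≠ l} => j m.val)
                (fun m : {m : Fin r // m ≠ l} => j m.val)).det) / (Nat.factorial r : ℝ) := by
          congr 1
          rw [Finset.sum_comm]
          refine Finset.sum_congr rfl fun j _ => ?_
          rw [hfrobadj j, Finset.mul_sum]
    _ = (∑ l : Fin r, ((n - (r-1) : ℕ) : ℝ) * (Nat.factorial r : ℝ)) / (Nat.factorial r : ℝ) := by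
          congr 1
          refine Finset.sum_congr rfl fun l _ => ?_
          rw [sum_inj_minor V hV l, hcardk l, hemb l]
    _ = (r:ℝ) * ((n - (r-1) : ℕ) : ℝ) := by
          rw [Finset.sum_const, Finset.card_univ, Fintype.card_fin, nsmul_eq_mul]
          field_simp
  -- assemble
  have hcast : ((n - (r-1) : ℕ) : ℝ) = (n:ℝ) - (r:ℝ) + 1 := by
    have h1 : r - 1 ≤ n := by omega
    rw [Nat.cast_sub h1, Nat.cast_sub hr]
    push_cast
    ring
  calc ∑ j : Fin r → Fin n, arpWeight V j * specNorm ((Vᵀ * EJ j)⁻¹) ^ 2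
      ≤ ∑ j : Fin r → Fin n, (arpWeight V j * frobSq ((Vᵀ * EJ j)⁻¹)
          - ((r:ℝ) - 1) * arpWeight V j) := Finset.sum_le_sum fun j _ => hper j
  _ = (∑ j : Fin r → Fin n, arpWeight V j * frobSq ((Vᵀ * EJ j)⁻¹))
        - ((r:ℝ) - 1) * ∑ j : Fin r → Fin n, arpWeight V j := by
        rw [Finset.sum_sub_distrib, Finset.mul_sum]
  _ ≤ (r:ℝ) * ((n - (r-1) : ℕ) : ℝ) - ((r:ℝ) - 1) * 1 := by
        rw [hsumw]
        exact sub_le_sub_right hsum1 _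
  _ = (r : ℝ) * ((n : ℝ) - (r : ℝ)) + 1 := by
        rw [hcast]
        ring
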